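/- Let N ≥ 2 be an integer and x : ℤ/Nℤ → ℂ a function. Then det(F_N·X_N) = ∏_{d | N} det(G_d), where for each positive divisor d of N, G_d is the square matrix indexed by u, v ∈ (ℤ/N_dℤ)^× whose (u,v)-entry is d·x̂_d(u·v^{−1}). -/

import Mathlib

/-- The Fourier matrix `F_N` with `(m,n)` entry `exp(2πi·mn/N)`, `0 ≤ m,n ≤ N−1`. -/
noncomputable def fourierMatrix (N : ℕ) : Matrix (Fin N) (Fin N) ℂ :=
  Matrix.of fun m n => Complex.exp (2 * Real.pi * Complex.I * (m : ℕ) * (n : ℕ) / N)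

/-- The semigroup matrix `X_N` attached to `x : ℤ/Nℤ → ℂ`:
its `(i,j)` entry is `x(ij mod N)`, `0 ≤ i,j ≤ N−1`. -/
def XMat (N : ℕ) (x : ZMod N → ℂ) : Matrix (Fin N) (Fin N) ℂ :=
  Matrix.of fun i j => x (((i : ℕ) : ZMod N) * ((j : ℕ) : ZMod N))

/-- For a divisor `d` of `N` and `t ∈ ℤ/N_dℤ` (`N_d = N/d`),
`x̂_d(t) = Σ_{r=0}^{N_d−1} x(dr mod N)·exp(2πi·tr/N_d)`. -/
noncomputable def xhat (N d : ℕ) (x : ZMod N → ℂ) (t : ZMod (N / d)) : ℂ :=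
  ∑ r ∈ Finset.range (N / d),
    x (((d * r : ℕ) : ZMod N)) *
      Complex.exp (2 * Real.pi * Complex.I * (ZMod.val t) * r / ((N / d : ℕ) : ℂ))

/-- The group determinant over `(ℤ/nℤ)ˣ` attached to `f : ℤ/nℤ → ℂ`:
the determinant of the matrix indexed by `u, v ∈ (ℤ/nℤ)ˣ` with `(u,v)` entry
`f(u·v⁻¹)`.  (The value for `n = 0` is irrelevant and set to `1`.) -/
noncomputable def unitsGroupDet : (n : ℕ) → (ZMod n → ℂ) → ℂ
  | 0, _ => 1
  | (n + 1), f =>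
      Matrix.det (Matrix.of fun u v : (ZMod (n + 1))ˣ => f ((u * v⁻¹ : (ZMod (n + 1))ˣ) : ZMod (n + 1)))

noncomputable def zeta (n : ℕ) : ℂ := Complex.exp (2 * Real.pi * Complex.I / n)

lemma zeta_pow (n k : ℕ) :
    Complex.exp (2 * Real.pi * Complex.I * k / n) = zeta n ^ k := by
  rw [zeta, ← Complex.exp_nat_mul]
  ring_nf

lemma zeta_pow_self (n : ℕ) (hn : n ≠ 0) : zeta n ^ n = 1 :=
  (Complex.isPrimitiveRoot_exp n hn).pow_eq_one

lemma zeta_pow_mod (n : ℕ) (hn : n ≠ 0) (k : ℕ) : zeta n ^ (k % n) = zeta n ^ k := by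
  conv_rhs => rw [← Nat.mod_add_div k n]
  rw [pow_add, pow_mul, zeta_pow_self n hn, one_pow, mul_one]

lemma zeta_pow_dvd (N d : ℕ) (hN : N ≠ 0) (hd : d ∣ N) : zeta N ^ d = zeta (N / d) := by
  have hd0 : d ≠ 0 := by rintro rfl; simp at hd; exact hN hd
  have hNd0 : (N / d : ℕ) ≠ 0 := Nat.div_ne_zero_iff.2 ⟨hd0, Nat.le_of_dvd (Nat.pos_of_ne_zero hN) hd⟩
  rw [zeta, zeta, ← Complex.exp_nat_mul]
  congr 1
  have hmul : ((N / d : ℕ) : ℂ) * d = N := by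
    rw [← Nat.cast_mul, Nat.div_mul_cancel hd]
  have h1 : ((N : ℕ) : ℂ) ≠ 0 := Nat.cast_ne_zero.2 hN
  have h2 : ((N / d : ℕ) : ℂ) ≠ 0 := Nat.cast_ne_zero.2 hNd0
  have hdiv : (d : ℂ) / N = 1 / ((N / d : ℕ) : ℂ) := by
    rw [div_eq_div_iff h1 h2, one_mul, mul_comm]; exact hmul
  calc (d : ℂ) * (2 * Real.pi * Complex.I / N)
      = (2 * Real.pi * Complex.I) * ((d : ℂ) / N) := by ring
    _ = (2 * Real.pi * Complex.I) * (1 / ((N / d : ℕ) : ℂ)) := by rw [hdiv]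
    _ = 2 * Real.pi * Complex.I / ((N / d : ℕ) : ℂ) := by ring

lemma sum_zeta_pow (d m : ℕ) (hd : d ≠ 0) :
    ∑ s ∈ Finset.range d, zeta d ^ (m * s) = if d ∣ m then (d : ℂ) else 0 := by
  have hprim := Complex.isPrimitiveRoot_exp d hd
  have hz : ∀ s, zeta d ^ (m * s) = (zeta d ^ m) ^ s := fun s => by rw [← pow_mul]
  simp only [hz]
  by_cases h : d ∣ m
  · rw [if_pos h]
    have : zeta d ^ m = 1 := (hprim.pow_eq_one_iff_dvd m).2 h
    simp [this]
  · rw [if_neg h]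
    have hne : zeta d ^ m ≠ 1 := fun hc => h ((hprim.pow_eq_one_iff_dvd m).1 hc)
    rw [geom_sum_eq hne]
    have : (zeta d ^ m) ^ d = 1 := by
      rw [← pow_mul, mul_comm, pow_mul, zeta_pow_self d hd, one_pow]
    rw [this, sub_self, zero_div]

lemma cast_d_mul_mod (N d : ℕ) (hdN : d ∣ N) (k : ℕ) :
    ((d * (k % (N / d)) : ℕ) : ZMod N) = ((d * k : ℕ) : ZMod N) := by
  conv_rhs => rw [← Nat.mod_add_div k (N / d)]
  have h : d * (k % (N / d) + (N / d) * (k / (N / d)))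
      = d * (k % (N / d)) + N * (k / (N / d)) := by
    rw [Nat.mul_add, ← Nat.mul_assoc, Nat.mul_div_cancel' hdN]
  rw [h]
  push_cast [ZMod.natCast_self]
  ring

lemma sum_range_eq_sum_zmod (n : ℕ) [NeZero n] (f : ZMod n → ℂ) :
    ∑ r ∈ Finset.range n, f ((r : ℕ) : ZMod n) = ∑ a : ZMod n, f a := by
  refine Finset.sum_nbij' (fun r => ((r : ℕ) : ZMod n)) (fun a => ZMod.val a) ?_ ?_ ?_ ?_ ?_
  · intro a _; exact Finset.mem_univ _
  · intro a _; exact Finset.mem_range.2 (ZMod.val_lt a)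
  · intro a ha
    show ZMod.val ((a : ℕ) : ZMod n) = a
    rw [ZMod.val_natCast, Nat.mod_eq_of_lt (Finset.mem_range.1 ha)]
  · intro a _
    show ((ZMod.val a : ℕ) : ZMod n) = a
    rw [ZMod.natCast_val, ZMod.cast_id]
  · intro a _; rfl

lemma sum_zmod_mul_unit (n : ℕ) [NeZero n] (f : ZMod n → ℂ) (w : (ZMod n)ˣ) :
    ∑ a : ZMod n, f (a * (w : ZMod n)) = ∑ a : ZMod n, f a := by
  exact Equiv.sum_comp (Units.mulRight w) f

lemma key_entry (N : ℕ) (hN : N ≠ 0) (x : ZMod N → ℂ) (d : ℕ) (hdN : d ∣ N)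
    (m j : Fin N) (hdj : d ∣ (j : ℕ)) :
    (fourierMatrix N * XMat N x) m j =
      (if d ∣ (m : ℕ) then (d : ℂ) else 0) *
        ∑ r ∈ Finset.range (N / d), zeta N ^ ((m : ℕ) * r) * x (((r * (j : ℕ) : ℕ) : ZMod N)) := by
  have hd0 : d ≠ 0 := by rintro rfl; simp at hdN; exact hN hdN
  have hNdd : N / d * d = N := Nat.div_mul_cancel hdN
  obtain ⟨j', hj'⟩ := hdj
  rw [Matrix.mul_apply]
  have hterm : ∀ n : Fin N,
      fourierMatrix N m n * XMat N x n j
        = zeta N ^ ((m : ℕ) * (n : ℕ)) * x ((((n : ℕ) * (j : ℕ) : ℕ) : ZMod N)) := by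
    intro n
    simp only [fourierMatrix, XMat, Matrix.of_apply]
    rw [← Nat.cast_mul, ← zeta_pow]
    congr 2
    push_cast; ring
  rw [Finset.sum_congr rfl (fun n _ => hterm n)]
  -- reindex by Fin d × Fin (N/d)
  set e : Fin d × Fin (N / d) ≃ Fin N :=
    finProdFinEquiv.trans (finCongr (Nat.mul_div_cancel' hdN)) with hedef
  rw [← Equiv.sum_comp e (fun n : Fin N =>
    zeta N ^ ((m : ℕ) * (n : ℕ)) * x ((((n : ℕ) * (j : ℕ) : ℕ) : ZMod N))), Fintype.sum_prod_type]
  have he : ∀ (s : Fin d) (r : Fin (N / d)), ((e (s, r) : Fin N) : ℕ) = (r : ℕ) + N / d * (s : ℕ) := by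
    intro s r
    rw [hedef]
    show ((finCongr (Nat.mul_div_cancel' hdN) (finProdFinEquiv (s, r))) : ℕ) = _
    rw [finCongr_apply, Fin.coe_cast, finProdFinEquiv_apply_val]
  have hsummand : ∀ (s : Fin d) (r : Fin (N / d)),
      zeta N ^ ((m : ℕ) * ((e (s, r) : Fin N) : ℕ)) * x (((((e (s, r) : Fin N) : ℕ) * (j : ℕ) : ℕ) : ZMod N))
        = zeta d ^ ((m : ℕ) * (s : ℕ)) * (zeta N ^ ((m : ℕ) * (r : ℕ)) * x ((((r : ℕ) * (j : ℕ) : ℕ) : ZMod N))) := by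
    intro s r
    rw [he]
    have hx : ((((r : ℕ) + N / d * (s : ℕ)) * (j : ℕ) : ℕ) : ZMod N)
        = ((((r : ℕ) * (j : ℕ)) : ℕ) : ZMod N) := by
      have h1 : ((r : ℕ) + N / d * (s : ℕ)) * (j : ℕ)
          = (r : ℕ) * (j : ℕ) + N / d * d * ((s : ℕ) * j') := by
        rw [hj']; ring
      rw [hNdd] at h1
      rw [h1]; push_cast [ZMod.natCast_self]; ring
    rw [hx]
    have hz : zeta N ^ ((m : ℕ) * ((r : ℕ) + N / d * (s : ℕ)))
        = zeta d ^ ((m : ℕ) * (s : ℕ)) * zeta N ^ ((m : ℕ) * (r : ℕ)) := by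
      have h2 : (m : ℕ) * ((r : ℕ) + N / d * (s : ℕ))
          = (m : ℕ) * (r : ℕ) + N / d * ((m : ℕ) * (s : ℕ)) := by ring
      rw [h2, pow_add, mul_comm]
      congr 1
      rw [pow_mul, zeta_pow_dvd N (N / d) hN (Nat.div_dvd_of_dvd hdN),
        Nat.div_div_self hdN hN]
    rw [hz, mul_assoc]
  rw [Finset.sum_congr rfl (fun s _ => Finset.sum_congr rfl (fun r _ => hsummand s r))]
  rw [← Finset.sum_mul_sum]
  rw [Fin.sum_univ_eq_sum_range (fun s => zeta d ^ ((m : ℕ) * s)) d,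
    Fin.sum_univ_eq_sum_range (fun r => zeta N ^ ((m : ℕ) * r) * x (((r * (j : ℕ) : ℕ) : ZMod N))) (N / d),
    sum_zeta_pow d (m : ℕ) hd0]

lemma natCast_val_eq (n : ℕ) [NeZero n] (a : ZMod n) : ((ZMod.val a : ℕ) : ZMod n) = a := by
  rw [ZMod.natCast_val, ZMod.cast_id]

lemma val_mul_natCast (n : ℕ) [NeZero n] (a : ZMod n) (r : ℕ) :
    ZMod.val (a * ((r : ℕ) : ZMod n)) = (ZMod.val a * r) % n := by
  conv_lhs => rw [← natCast_val_eq n a, ← Nat.cast_mul]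
  rw [ZMod.val_natCast]

lemma val_natCast_mul (n : ℕ) [NeZero n] (r : ℕ) (a : ZMod n) :
    ZMod.val (((r : ℕ) : ZMod n) * a) = (r * ZMod.val a) % n := by
  rw [mul_comm, val_mul_natCast, Nat.mul_comm]

lemma zeta_pow_congr (n : ℕ) (hn : n ≠ 0) {a b : ℕ} (h : a % n = b % n) :
    zeta n ^ a = zeta n ^ b := by
  rw [← zeta_pow_mod n hn a, h, zeta_pow_mod n hn]

lemma xhat_as_zeta (N d : ℕ) (x : ZMod N → ℂ) (t : ZMod (N / d)) :
    xhat N d x t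
      = ∑ r ∈ Finset.range (N / d), x (((d * r : ℕ) : ZMod N)) * zeta (N / d) ^ (ZMod.val t * r) := by
  unfold xhat
  refine Finset.sum_congr rfl fun r _ => ?_
  congr 1
  rw [← zeta_pow]
  congr 1
  push_cast; ring

lemma sum_units (N : ℕ) (hN : N ≠ 0) (x : ZMod N → ℂ) (d : ℕ) (hdN : d ∣ N)
    (u v : (ZMod (N / d))ˣ) :
    ∑ r ∈ Finset.range (N / d),
        zeta N ^ ((d * ZMod.val ((u : (ZMod (N / d))ˣ) : ZMod (N / d))) * r) *
          x (((r * (d * ZMod.val ((v : (ZMod (N / d))ˣ) : ZMod (N / d))) : ℕ) : ZMod N))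
      = xhat N d x ((u * v⁻¹ : (ZMod (N / d))ˣ) : ZMod (N / d)) := by
  have hd0 : d ≠ 0 := by rintro rfl; simp at hdN; exact hN hdN
  have hn : N / d ≠ 0 := by
    have h := Nat.div_mul_cancel hdN
    intro hc; rw [hc, zero_mul] at h; exact hN h.symm
  haveI : NeZero (N / d) := ⟨hn⟩
  have step1 : ∀ r ∈ Finset.range (N / d),
      zeta N ^ ((d * ZMod.val ((u : (ZMod (N / d))ˣ) : ZMod (N / d))) * r) *
          x (((r * (d * ZMod.val ((v : (ZMod (N / d))ˣ) : ZMod (N / d))) : ℕ) : ZMod N))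
        = (fun a : ZMod (N / d) =>
            zeta (N / d) ^ (ZMod.val ((u : ZMod (N / d)) * a)) *
              x (((d * ZMod.val (a * (v : ZMod (N / d))) : ℕ) : ZMod N))) ((r : ℕ) : ZMod (N / d)) := by
    intro r _
    simp only
    congr 1
    · rw [val_mul_natCast, zeta_pow_mod _ hn, mul_assoc, pow_mul, zeta_pow_dvd N d hN hdN]
    · rw [val_natCast_mul, cast_d_mul_mod N d hdN]
      congr 1
      ring
  rw [Finset.sum_congr rfl step1,
    sum_range_eq_sum_zmod (N / d) (fun a : ZMod (N / d) =>
      zeta (N / d) ^ (ZMod.val ((u : ZMod (N / d)) * a)) *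
        x (((d * ZMod.val (a * (v : ZMod (N / d))) : ℕ) : ZMod N))),
    ← sum_zmod_mul_unit (N / d) (fun a : ZMod (N / d) =>
      zeta (N / d) ^ (ZMod.val ((u : ZMod (N / d)) * a)) *
        x (((d * ZMod.val (a * (v : ZMod (N / d))) : ℕ) : ZMod N))) v⁻¹]
  have step2 : ∀ a : ZMod (N / d),
      (fun a : ZMod (N / d) =>
          zeta (N / d) ^ (ZMod.val ((u : ZMod (N / d)) * a)) *
            x (((d * ZMod.val (a * (v : ZMod (N / d))) : ℕ) : ZMod N)))
        (a * ((v⁻¹ : (ZMod (N / d))ˣ) : ZMod (N / d)))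
        = (fun a : ZMod (N / d) =>
            x (((d * ZMod.val a : ℕ) : ZMod N)) *
              zeta (N / d) ^ (ZMod.val (((u * v⁻¹ : (ZMod (N / d))ˣ) : ZMod (N / d))) * ZMod.val a)) a := by
    intro a
    simp only
    have h1 : a * ((v⁻¹ : (ZMod (N / d))ˣ) : ZMod (N / d)) * ((v : (ZMod (N / d))ˣ) : ZMod (N / d)) = a := by
      rw [mul_assoc, ← Units.val_mul, inv_mul_cancel, Units.val_one, mul_one]
    have h2 : (u : ZMod (N / d)) * (a * ((v⁻¹ : (ZMod (N / d))ˣ) : ZMod (N / d)))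
        = ((u * v⁻¹ : (ZMod (N / d))ˣ) : ZMod (N / d)) * a := by
      rw [Units.val_mul]; ring
    rw [h1, h2, mul_comm]
    congr 1
    conv_lhs => rw [← natCast_val_eq (N / d) a, val_mul_natCast]
    rw [zeta_pow_mod _ hn]
  rw [Finset.sum_congr rfl (fun a _ => step2 a),
    ← sum_range_eq_sum_zmod (N / d) (fun a : ZMod (N / d) =>
      x (((d * ZMod.val a : ℕ) : ZMod N)) *
        zeta (N / d) ^ (ZMod.val (((u * v⁻¹ : (ZMod (N / d))ˣ) : ZMod (N / d))) * ZMod.val a)),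
    xhat_as_zeta]
  refine Finset.sum_congr rfl fun r hr => ?_
  have hrn : ZMod.val ((r : ℕ) : ZMod (N / d)) = r := by
    rw [ZMod.val_natCast, Nat.mod_eq_of_lt (Finset.mem_range.1 hr)]
  show x (((d * ZMod.val ((r : ℕ) : ZMod (N / d)) : ℕ) : ZMod N)) *
      zeta (N / d) ^ (ZMod.val (((u * v⁻¹ : (ZMod (N / d))ˣ) : ZMod (N / d))) * ZMod.val ((r : ℕ) : ZMod (N / d))) = _
  rw [hrn]

lemma ndiv_ne_zero {N d : ℕ} (hN : N ≠ 0) (hdN : d ∣ N) : N / d ≠ 0 := by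
  have h := Nat.div_mul_cancel hdN
  intro hc; rw [hc, zero_mul] at h; exact hN h.symm

lemma entry_units (N : ℕ) (hN : N ≠ 0) (x : ZMod N → ℂ) (d : ℕ) (hdN : d ∣ N)
    (u v : (ZMod (N / d))ˣ) (m j : Fin N)
    (hm : (m : ℕ) = d * ZMod.val ((u : (ZMod (N / d))ˣ) : ZMod (N / d)))
    (hj : (j : ℕ) = d * ZMod.val ((v : (ZMod (N / d))ˣ) : ZMod (N / d))) :
    (fourierMatrix N * XMat N x) m j
      = (d : ℂ) * xhat N d x ((u * v⁻¹ : (ZMod (N / d))ˣ) : ZMod (N / d)) := by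
  rw [key_entry N hN x d hdN m j (by rw [hj]; exact dvd_mul_right _ _),
    if_pos (show d ∣ (m : ℕ) by rw [hm]; exact dvd_mul_right _ _), hm, hj]
  congr 1
  exact sum_units N hN x d hdN u v

lemma entry_zero (N : ℕ) (hN : N ≠ 0) (x : ZMod N → ℂ) (m j : Fin N)
    (h : ¬ (Nat.gcd (j : ℕ) N ∣ (m : ℕ))) :
    (fourierMatrix N * XMat N x) m j = 0 := by
  rw [key_entry N hN x (Nat.gcd (j : ℕ) N) (Nat.gcd_dvd_right _ _) m j (Nat.gcd_dvd_left _ _),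
    if_neg h, zero_mul]

noncomputable def blockEquiv (N d : ℕ) (hN : N ≠ 0) (hdN : d ∣ N) (hd0 : d ≠ 0) :
    (ZMod (N / d))ˣ ≃ {i : Fin N // Nat.gcd (i : ℕ) N = d} := by
  haveI : NeZero (N / d) := ⟨ndiv_ne_zero hN hdN⟩
  have hdpos : 0 < d := Nat.pos_of_ne_zero hd0
  have hNdd : d * (N / d) = N := Nat.mul_div_cancel' hdN
  have hco : ∀ i : {i : Fin N // Nat.gcd ((i : Fin N) : ℕ) N = d},
      Nat.Coprime ((((i : Fin N) : ℕ)) / d) (N / d) := by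
    intro i
    have hgcd : Nat.gcd ((i : Fin N) : ℕ) N = d := i.2
    have hpos : 0 < Nat.gcd ((i : Fin N) : ℕ) N := by rw [hgcd]; exact hdpos
    have h := Nat.coprime_div_gcd_div_gcd (m := ((i : Fin N) : ℕ)) (n := N) hpos
    rwa [hgcd] at h
  refine
    { toFun := fun u => ⟨⟨d * ZMod.val ((u : (ZMod (N / d))ˣ) : ZMod (N / d)), ?_⟩, ?_⟩
      invFun := fun i => ZMod.unitOfCoprime (((i : Fin N) : ℕ) / d) (hco i)
      left_inv := ?_
      right_inv := ?_ }
  · calc d * ZMod.val ((u : (ZMod (N / d))ˣ) : ZMod (N / d))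
        < d * (N / d) := by
          exact Nat.mul_lt_mul_of_le_of_lt (le_refl d) (ZMod.val_lt _) hdpos
      _ = N := hNdd
  · show Nat.gcd (d * ZMod.val ((u : (ZMod (N / d))ˣ) : ZMod (N / d))) N = d
    have h2 : Nat.gcd (d * ZMod.val ((u : (ZMod (N / d))ˣ) : ZMod (N / d))) (d * (N / d))
        = d * Nat.gcd (ZMod.val ((u : (ZMod (N / d))ˣ) : ZMod (N / d))) (N / d) :=
      Nat.gcd_mul_left _ _ _
    rw [hNdd] at h2
    rw [h2]
    have h3 := ZMod.val_coe_unit_coprime u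
    rw [Nat.Coprime] at h3
    rw [h3, mul_one]
  · intro u
    apply Units.ext
    rw [ZMod.coe_unitOfCoprime]
    show (((d * ZMod.val ((u : (ZMod (N / d))ˣ) : ZMod (N / d))) / d : ℕ) : ZMod (N / d)) = _
    rw [Nat.mul_div_cancel_left _ hdpos, natCast_val_eq]
  · intro i
    apply Subtype.ext
    apply Fin.ext
    show d * ZMod.val (((((i : Fin N) : ℕ) / d : ℕ) : ZMod (N / d))) = ((i : Fin N) : ℕ)
    have hdvd : d ∣ ((i : Fin N) : ℕ) := by
      have h := Nat.gcd_dvd_left ((i : Fin N) : ℕ) N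
      rwa [i.2] at h
    have hlt : ((i : Fin N) : ℕ) / d < N / d :=
      Nat.div_lt_div_of_lt_of_dvd hdN (i : Fin N).isLt
    rw [ZMod.val_natCast, Nat.mod_eq_of_lt hlt, Nat.mul_div_cancel' hdvd]

lemma unitsGroupDet_eq (n : ℕ) [NeZero n] (f : ZMod n → ℂ) :
    unitsGroupDet n f
      = Matrix.det (Matrix.of fun u v : (ZMod n)ˣ => f ((u * v⁻¹ : (ZMod n)ˣ) : ZMod n)) := by
  cases n with
  | zero => exact absurd rfl (NeZero.ne 0)
  | succ k => rfl

/-- `det(F_N·X_N) = ∏_{d ∣ N} det G_d`, where `G_d` is the matrix indexed by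
`u, v ∈ (ℤ/N_dℤ)ˣ` with `(u,v)` entry `d·x̂_d(u·v⁻¹)`. -/
theorem det_fourierMatrix_mul_XMat (N : ℕ) (hN : 2 ≤ N) (x : ZMod N → ℂ) :
    (fourierMatrix N * XMat N x).det =
      ∏ d ∈ N.divisors, unitsGroupDet (N / d) (fun t => (d : ℂ) * xhat N d x t) := by
  have hN0 : N ≠ 0 := by omega
  set A := fourierMatrix N * XMat N x with hA
  set b : Fin N → ℕᵒᵈ := fun i => OrderDual.toDual (Nat.gcd (i : ℕ) N) with hb
  have hBT : A.BlockTriangular b := by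
    intro i j hij
    have hlt : Nat.gcd (i : ℕ) N < Nat.gcd (j : ℕ) N := hij
    rw [hA]
    apply entry_zero N hN0 x i j
    intro hdvd
    have h1 : Nat.gcd (j : ℕ) N ∣ Nat.gcd (i : ℕ) N :=
      Nat.dvd_gcd hdvd (Nat.gcd_dvd_right _ _)
    have h2 : Nat.gcd (j : ℕ) N ≤ Nat.gcd (i : ℕ) N :=
      Nat.le_of_dvd (Nat.gcd_pos_of_pos_right _ (Nat.pos_of_ne_zero hN0)) h1
    omega
  rw [hBT.det]
  have himg : Finset.image b Finset.univ = Finset.image OrderDual.toDual N.divisors := by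
    ext a
    simp only [Finset.mem_image, Finset.mem_univ, true_and, Nat.mem_divisors]
    constructor
    · rintro ⟨i, rfl⟩
      exact ⟨Nat.gcd ((i : Fin N) : ℕ) N, ⟨Nat.gcd_dvd_right _ _, hN0⟩, rfl⟩
    · rintro ⟨d, ⟨hdN, -⟩, rfl⟩
      refine ⟨⟨d % N, Nat.mod_lt _ (Nat.pos_of_ne_zero hN0)⟩, ?_⟩
      show OrderDual.toDual (Nat.gcd (d % N) N) = OrderDual.toDual d
      congr 1
      rw [← Nat.gcd_rec N d, Nat.gcd_comm, Nat.gcd_eq_left hdN]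
  rw [himg, Finset.prod_image (fun _ _ _ _ h => OrderDual.toDual.injective h)]
  apply Finset.prod_congr rfl
  intro d hd
  obtain ⟨hdN, -⟩ := Nat.mem_divisors.1 hd
  have hd0 : d ≠ 0 := by rintro rfl; rw [zero_dvd_iff] at hdN; exact hN0 hdN
  haveI : NeZero (N / d) := ⟨ndiv_ne_zero hN0 hdN⟩
  rw [unitsGroupDet_eq (N / d)]
  set e0 : {i : Fin N // b i = OrderDual.toDual d} ≃ {i : Fin N // Nat.gcd ((i : Fin N) : ℕ) N = d} :=
    Equiv.subtypeEquivRight (fun i => by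
      show OrderDual.toDual (Nat.gcd ((i : Fin N) : ℕ) N) = OrderDual.toDual d ↔ _
      exact OrderDual.toDual_inj) with he0
  set e : (ZMod (N / d))ˣ ≃ {i : Fin N // b i = OrderDual.toDual d} :=
    (blockEquiv N d hN0 hdN hd0).trans e0.symm with he
  rw [← Matrix.det_submatrix_equiv_self e (A.toSquareBlock b (OrderDual.toDual d))]
  refine congrArg Matrix.det ?_
  ext u v
  show A (((e u) : {i : Fin N // b i = OrderDual.toDual d}) : Fin N)
      (((e v) : {i : Fin N // b i = OrderDual.toDual d}) : Fin N)
    = (d : ℂ) * xhat N d x ((u * v⁻¹ : (ZMod (N / d))ˣ) : ZMod (N / d))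
  rw [hA]
  exact entry_units N hN0 x d hdN u v _ _ (by rw [he, he0]; rfl) (by rw [he, he0]; rfl)
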